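/- Periodicity of integral curves of a positive periodic vector field on the circle: let f : ℝ → ℝ be smooth, 2π-periodic and everywhere positive, and set R = (1/2π) ∫₀^{2π} dθ / f(θ). Then there exists a smooth function θ : ℝ → ℝ such that θ′(s) = f(θ(s)) for all s ∈ ℝ, θ(0) = 0, and θ(s + 2πR) = θ(s) + 2π for all s ∈ ℝ. In particular θ descends to an orientation-preserving diffeomorphism from ℝ/2πRℤ to ℝ/2πℤ. -/

import Mathlib

open Real Filter

/-- Periodicity of integral curves of a positive 2π-periodic vector field f∂θ on the
circle: with R = (1/2π)∫₀^{2π} dθ/f(θ), there is a smooth integral curve θ of f with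
θ(0) = 0 and θ(s + 2πR) = θ(s) + 2π for all s. -/
theorem integral_curve_of_positive_periodic_field_is_periodic
    (f : ℝ → ℝ) (hf : ContDiff ℝ (⊤ : ℕ∞) f)
    (hper : ∀ θ : ℝ, f (θ + 2 * π) = f θ)
    (hpos : ∀ θ : ℝ, 0 < f θ)
    (R : ℝ)
    (hR : R = (2 * π)⁻¹ * ∫ θ in (0:ℝ)..(2 * π), 1 / f θ) :
    ∃ θ : ℝ → ℝ, ContDiff ℝ (⊤ : ℕ∞) θ ∧
      (∀ s : ℝ, deriv θ s = f (θ s)) ∧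
      θ 0 = 0 ∧
      (∀ s : ℝ, θ (s + 2 * π * R) = θ s + 2 * π) := by
  have hπ : (0:ℝ) < 2 * π := by positivity
  have hfc : Continuous f := hf.continuous
  have hne : ∀ t, f t ≠ 0 := fun t => (hpos t).ne'
  have hinvc : Continuous fun t => (f t)⁻¹ := hfc.inv₀ hne
  have hinvpos : ∀ t, 0 < (f t)⁻¹ := fun t => inv_pos.2 (hpos t)
  have hperiodic : Function.Periodic (fun t => (f t)⁻¹) (2 * π) := fun t => by
    simp [hper t]
  have h_int : ∀ a b : ℝ, IntervalIntegrable (fun t => (f t)⁻¹) MeasureTheory.volume a b :=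
    fun a b => hinvc.intervalIntegrable a b
  set g : ℝ → ℝ := fun x => ∫ t in (0:ℝ)..x, (f t)⁻¹ with hgdef
  -- derivative of g
  have hgderiv : ∀ x, HasDerivAt g (f x)⁻¹ x := fun x =>
    (intervalIntegral.integral_hasStrictDerivAt_right (h_int 0 x)
      (hinvc.stronglyMeasurableAtFilter _ _) hinvc.continuousAt).hasDerivAt
  have hgmono : StrictMono g := strictMono_of_hasDerivAt_pos hgderiv hinvpos
  have hgc : Continuous g := continuous_iff_continuousAt.2 fun x => (hgderiv x).continuousAt
  -- additive quasi-periodicity of g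
  have hIR : (∫ t in (0:ℝ)..(2*π), (f t)⁻¹) = 2 * π * R := by
    rw [hR, ← mul_assoc, mul_inv_cancel₀ hπ.ne', one_mul]
    simp [one_div]
  have hadd : ∀ x : ℝ, g (x + 2 * π) = g x + 2 * π * R := by
    intro x
    have h1 := intervalIntegral.integral_add_adjacent_intervals (h_int 0 x) (h_int x (x + 2*π))
    have h2 : (∫ t in x..(x + 2*π), (f t)⁻¹) = ∫ t in (0:ℝ)..(0 + 2*π), (f t)⁻¹ :=
      hperiodic.intervalIntegral_add_eq x 0
    simp only [zero_add] at h2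
    have h3 : g (x + 2*π) = g x + ∫ t in x..(x + 2*π), (f t)⁻¹ := h1.symm
    rw [h3, h2, hIR]
  have hRpos : 0 < 2 * π * R := by
    rw [← hIR]
    exact intervalIntegral.intervalIntegral_pos_of_pos (h_int 0 (2*π)) hinvpos hπ
  -- surjectivity of g
  have hgsurj : Function.Surjective g :=
    Continuous.surjective hgc
      (hperiodic.tendsto_atTop_intervalIntegral_of_pos' (h_int 0 (2 * π)) hinvpos hπ)
      (hperiodic.tendsto_atBot_intervalIntegral_of_pos' (h_int 0 (2 * π)) hinvpos hπ)
  have hgbij : Function.Bijective g := ⟨hgmono.injective, hgsurj⟩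
  -- the inverse function θ
  set e : ℝ ≃o ℝ := StrictMono.orderIsoOfSurjective g hgmono hgsurj with hedef
  have hecoe : ∀ x, e x = g x := fun x => rfl
  set θ : ℝ → ℝ := fun s => e.symm s with hθdef
  have hgθ : ∀ s, g (θ s) = s := fun s => by
    rw [← hecoe]; exact e.apply_symm_apply s
  have hθg : ∀ x, θ (g x) = x := fun x => by
    rw [← hecoe]; exact e.symm_apply_apply x
  have hθc : Continuous θ := e.symm.continuous
  -- derivative of θ
  have hθderiv : ∀ s, HasDerivAt θ (f (θ s)) s := by
    intro s
    have h := HasDerivAt.of_local_left_inverse (hθc.continuousAt)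
      (hgderiv (θ s)) (ne_of_gt (hinvpos (θ s)))
      (Filter.Eventually.of_forall hgθ)
    rwa [inv_inv] at h
  have hθdiff : Differentiable ℝ θ := fun s => (hθderiv s).differentiableAt
  have hderiveq : deriv θ = fun s => f (θ s) := funext fun s => (hθderiv s).deriv
  -- θ 0 = 0
  have hg0 : g 0 = 0 := intervalIntegral.integral_same
  have hθ0 : θ 0 = 0 := by have h := hθg 0; rwa [hg0] at h
  -- periodicity
  have hθper : ∀ s : ℝ, θ (s + 2 * π * R) = θ s + 2 * π := by
    intro s
    apply hgmono.injective
    rw [hgθ, hadd, hgθ]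
  -- smoothness by bootstrap
  have hsmooth : ∀ n : ℕ, ContDiff ℝ n θ := by
    intro n
    induction n with
    | zero => exact contDiff_zero.2 hθc
    | succ n ih =>
      have h1 : ContDiff ℝ ((n : ℕ∞) + 1) θ := by
        refine contDiff_succ_iff_deriv.2 ⟨hθdiff, fun h => by simp at h, ?_⟩
        rw [hderiveq]
        exact (hf.of_le (by exact_mod_cast le_top)).comp ih
      exact_mod_cast h1
  exact ⟨θ, contDiff_infty.2 hsmooth, fun s => (hθderiv s).deriv, hθ0, hθper⟩
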